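/- Let T > 0 and k be a positive integer. (i) If (4k−1)π/T < ρ < 4kπ/T, then (∫₀ᵀ G_P⁺(0,s) ds)/(∫₀ᵀ G_P⁻(0,s) ds) = 2k/(2k+sin(ρT/2)). (ii) If 4kπ/T < ρ < (4k+1)π/T, then (∫₀ᵀ G_P⁺(0,s) ds)/(∫₀ᵀ G_P⁻(0,s) ds) = (2k+sin(ρT/2))/(2k). -/

import Mathlib

open Real Set intervalIntegral

/-- The Green's function of the periodic problem `u'' + ρ²u = 0`,
`u(0) = u(T)`, `u'(0) = u'(T)`. -/
noncomputable def GreenP (T ρ t s : ℝ) : ℝ :=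
  if s ≤ t then (sin (ρ * (t - s)) + sin (ρ * (T - t + s))) / (2 * ρ * (1 - cos (ρ * T)))
  else (sin (ρ * (s - t)) + sin (ρ * (T - s + t))) / (2 * ρ * (1 - cos (ρ * T)))

/-- Positive part of the periodic Green's function. -/
noncomputable def GreenPpos (T ρ t s : ℝ) : ℝ := max (GreenP T ρ t s) 0

/-- Negative part of the periodic Green's function. -/
noncomputable def GreenPneg (T ρ t s : ℝ) : ℝ := max (-(GreenP T ρ t s)) 0


lemma int_cospos_period : ∫ u in (0:ℝ)..(2*π), max (cos u) 0 = 2 := by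
  have hpi := pi_pos
  have hint : ∀ a b : ℝ, IntervalIntegrable (fun u => max (cos u) 0) MeasureTheory.volume a b :=
    fun a b => (Real.continuous_cos.max continuous_const).intervalIntegrable a b
  have h1 : ∫ u in (0:ℝ)..(π/2), max (cos u) 0 = 1 := by
    rw [intervalIntegral.integral_congr (g := fun u => cos u)
      (fun x hx => by
        rw [uIcc_of_le (by linarith)] at hx
        exact max_eq_left (cos_nonneg_of_mem_Icc ⟨by linarith [hx.1], by linarith [hx.2]⟩)),
      integral_cos]
    simp
  have h2 : ∫ u in (π/2:ℝ)..(3*π/2), max (cos u) 0 = 0 := by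
    rw [intervalIntegral.integral_congr (g := fun u => 0)
      (fun x hx => by
        rw [uIcc_of_le (by linarith)] at hx
        exact max_eq_right (cos_nonpos_of_pi_div_two_le_of_le hx.1 (by linarith [hx.2])))]
    simp
  have h3 : ∫ u in (3*π/2:ℝ)..(2*π), max (cos u) 0 = 1 := by
    rw [intervalIntegral.integral_congr (g := fun u => cos u)
      (fun x hx => by
        rw [uIcc_of_le (by linarith)] at hx
        refine max_eq_left ?_
        have : cos x = cos (x - 2*π) := by rw [Real.cos_sub_two_pi]
        rw [this]
        exact cos_nonneg_of_mem_Icc ⟨by linarith [hx.1], by linarith [hx.2]⟩),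
      integral_cos]
    have : (3*π/2 : ℝ) = π + π/2 := by ring
    rw [Real.sin_two_pi, this, Real.sin_add, Real.sin_pi, Real.cos_pi]
    simp
  rw [← intervalIntegral.integral_add_adjacent_intervals (hint 0 (π/2)) (hint (π/2) (2*π)),
      ← intervalIntegral.integral_add_adjacent_intervals (hint (π/2) (3*π/2)) (hint (3*π/2) (2*π)),
      h1, h2, h3]
  ring

lemma int_cosneg_period : ∫ u in (0:ℝ)..(2*π), max (-cos u) 0 = 2 := by
  have hpi := pi_pos
  have hint : ∀ a b : ℝ, IntervalIntegrable (fun u => max (-cos u) 0) MeasureTheory.volume a b :=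
    fun a b => (Real.continuous_cos.neg.max continuous_const).intervalIntegrable a b
  have h1 : ∫ u in (0:ℝ)..(π/2), max (-cos u) 0 = 0 := by
    rw [intervalIntegral.integral_congr (g := fun u => 0)
      (fun x hx => by
        rw [uIcc_of_le (by linarith)] at hx
        refine max_eq_right ?_
        simp only [neg_nonpos]
        exact cos_nonneg_of_mem_Icc ⟨by linarith [hx.1], by linarith [hx.2]⟩)]
    simp
  have h2 : ∫ u in (π/2:ℝ)..(3*π/2), max (-cos u) 0 = 2 := by
    rw [intervalIntegral.integral_congr (g := fun u => -cos u)
      (fun x hx => by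
        rw [uIcc_of_le (by linarith)] at hx
        refine max_eq_left ?_
        simp only [neg_nonneg]
        exact cos_nonpos_of_pi_div_two_le_of_le hx.1 (by linarith [hx.2])),
      intervalIntegral.integral_neg, integral_cos]
    have : (3*π/2 : ℝ) = π + π/2 := by ring
    rw [this, Real.sin_add, Real.sin_pi, Real.cos_pi]
    simp; ring
  have h3 : ∫ u in (3*π/2:ℝ)..(2*π), max (-cos u) 0 = 0 := by
    rw [intervalIntegral.integral_congr (g := fun u => 0)
      (fun x hx => by
        rw [uIcc_of_le (by linarith)] at hx
        refine max_eq_right ?_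
        simp only [neg_nonpos]
        have : cos x = cos (x - 2*π) := by rw [Real.cos_sub_two_pi]
        rw [this]
        exact cos_nonneg_of_mem_Icc ⟨by linarith [hx.1], by linarith [hx.2]⟩)]
    simp
  rw [← intervalIntegral.integral_add_adjacent_intervals (hint 0 (π/2)) (hint (π/2) (2*π)),
      ← intervalIntegral.integral_add_adjacent_intervals (hint (π/2) (3*π/2)) (hint (3*π/2) (2*π)),
      h1, h2, h3]
  ring


lemma key_pos (k : ℕ) (θ : ℝ) (h1 : 2*k*π - π/2 < θ) (h2 : θ < 2*k*π + π/2) :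
    ∫ u in (-θ)..θ, max (cos u) 0 = 4*k + 2*sin θ := by
  have hpi := pi_pos
  have hp : Function.Periodic (fun u => max (cos u) 0) (2*π) := fun x => by
    simp [Real.cos_periodic x]
  have hint : ∀ a b : ℝ, IntervalIntegrable (fun u => max (cos u) 0) MeasureTheory.volume a b :=
    fun a b => (Real.continuous_cos.max continuous_const).intervalIntegrable a b
  have hsplit := intervalIntegral.integral_add_adjacent_intervals
    (hint (-θ) (4*k*π - θ)) (hint (4*k*π - θ) θ)
  have hA : ∫ u in (-θ)..(4*k*π - θ), max (cos u) 0 = 4*k := by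
    have := hp.intervalIntegral_add_zsmul_eq (2*k : ℤ) (-θ) hint
    have hb : -θ + (2*k : ℤ) • (2*π) = 4*k*π - θ := by
      push_cast [zsmul_eq_mul]; ring
    rw [hb] at this
    rw [this, hp.intervalIntegral_add_eq (-θ) 0, zero_add, int_cospos_period]
    push_cast [zsmul_eq_mul]; ring
  have hB : ∫ u in (4*k*π - θ)..θ, max (cos u) 0 = 2*sin θ := by
    have hcomp := intervalIntegral.integral_comp_add_right (a := 2*k*π - θ) (b := θ - 2*k*π)
      (fun u => max (cos u) 0) (2*k*π)
    have e1 : 2*k*π - θ + 2*k*π = 4*k*π - θ := by ring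
    have e2 : θ - 2*k*π + 2*k*π = θ := by ring
    rw [e1, e2] at hcomp
    rw [← hcomp]
    have : ∫ u in (2*k*π - θ)..(θ - 2*k*π), max (cos (u + 2*k*π)) 0
        = ∫ u in (2*k*π - θ)..(θ - 2*k*π), cos u := by
      apply intervalIntegral.integral_congr
      intro x hx
      have l1 : min (2*k*π - θ) (θ - 2*k*π) ≤ x := hx.1
      have l2 : x ≤ max (2*k*π - θ) (θ - 2*k*π) := hx.2
      have l3 : -(π/2) ≤ min (2*k*π - θ) (θ - 2*k*π) := le_min (by linarith) (by linarith)
      have l4 : max (2*k*π - θ) (θ - 2*k*π) ≤ π/2 := max_le (by linarith) (by linarith)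
      have hc : cos (x + 2*k*π) = cos x := by
        have := Real.cos_add_nat_mul_two_pi x k
        rw [show (k:ℝ)*(2*π) = 2*k*π by ring] at this
        exact this
      simp only [hc]
      exact max_eq_left (cos_nonneg_of_mem_Icc ⟨by linarith, by linarith⟩)
    rw [this, integral_cos]
    have hs : sin (θ - 2*k*π) = sin θ := by
      have h := Real.sin_add_nat_mul_two_pi (θ - 2*k*π) k
      rw [show θ - 2*k*π + k*(2*π) = θ by ring] at h
      exact h.symm
    rw [show 2*k*π - θ = -(θ - 2*k*π) by ring, Real.sin_neg, hs]
    ring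
  rw [← hsplit, hA, hB]

lemma key_neg (k : ℕ) (θ : ℝ) (h1 : 2*k*π - π/2 < θ) (h2 : θ < 2*k*π + π/2) :
    ∫ u in (-θ)..θ, max (-cos u) 0 = 4*k := by
  have hpi := pi_pos
  have hp : Function.Periodic (fun u => max (-cos u) 0) (2*π) := fun x => by
    simp [Real.cos_periodic x]
  have hint : ∀ a b : ℝ, IntervalIntegrable (fun u => max (-cos u) 0) MeasureTheory.volume a b :=
    fun a b => (Real.continuous_cos.neg.max continuous_const).intervalIntegrable a b
  have hsplit := intervalIntegral.integral_add_adjacent_intervals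
    (hint (-θ) (4*k*π - θ)) (hint (4*k*π - θ) θ)
  have hA : ∫ u in (-θ)..(4*k*π - θ), max (-cos u) 0 = 4*k := by
    have := hp.intervalIntegral_add_zsmul_eq (2*k : ℤ) (-θ) hint
    have hb : -θ + (2*k : ℤ) • (2*π) = 4*k*π - θ := by
      push_cast [zsmul_eq_mul]; ring
    rw [hb] at this
    rw [this, hp.intervalIntegral_add_eq (-θ) 0, zero_add, int_cosneg_period]
    push_cast [zsmul_eq_mul]; ring
  have hB : ∫ u in (4*k*π - θ)..θ, max (-cos u) 0 = 0 := by
    have hcomp := intervalIntegral.integral_comp_add_right (a := 2*k*π - θ) (b := θ - 2*k*π)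
      (fun u => max (-cos u) 0) (2*k*π)
    have e1 : 2*k*π - θ + 2*k*π = 4*k*π - θ := by ring
    have e2 : θ - 2*k*π + 2*k*π = θ := by ring
    rw [e1, e2] at hcomp
    rw [← hcomp]
    have : ∫ u in (2*k*π - θ)..(θ - 2*k*π), max (-cos (u + 2*k*π)) 0
        = ∫ u in (2*k*π - θ)..(θ - 2*k*π), (0:ℝ) := by
      apply intervalIntegral.integral_congr
      intro x hx
      have l1 : min (2*k*π - θ) (θ - 2*k*π) ≤ x := hx.1
      have l2 : x ≤ max (2*k*π - θ) (θ - 2*k*π) := hx.2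
      have l3 : -(π/2) ≤ min (2*k*π - θ) (θ - 2*k*π) := le_min (by linarith) (by linarith)
      have l4 : max (2*k*π - θ) (θ - 2*k*π) ≤ π/2 := max_le (by linarith) (by linarith)
      have hc : cos (x + 2*k*π) = cos x := by
        have := Real.cos_add_nat_mul_two_pi x k
        rw [show (k:ℝ)*(2*π) = 2*k*π by ring] at this
        exact this
      simp only [hc]
      refine max_eq_right ?_
      simp only [neg_nonpos]
      exact cos_nonneg_of_mem_Icc ⟨by linarith, by linarith⟩
    rw [this]; simp
  rw [← hsplit, hA, hB]; ring

lemma greenP_eq (T ρ : ℝ) (hρ : ρ ≠ 0) (hs : sin (ρ*T/2) ≠ 0) (s : ℝ) (h0 : 0 ≤ s) :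
    GreenP T ρ 0 s = cos (ρ*s - ρ*T/2) / (2*ρ*sin (ρ*T/2)) := by
  have hden : 1 - cos (ρ*T) = 2 * sin (ρ*T/2)^2 := by
    have h := Real.cos_two_mul (ρ*T/2)
    rw [show 2*(ρ*T/2) = ρ*T by ring] at h
    have h2 := Real.sin_sq_add_cos_sq (ρ*T/2)
    nlinarith
  have hnum : ∀ x : ℝ, sin (ρ*x) + sin (ρ*(T-x)) = 2 * sin (ρ*T/2) * cos (ρ*x - ρ*T/2) := by
    intro x
    have key : ∀ a b : ℝ, sin (b + a) + sin (b - a) = 2 * sin b * cos a := by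
      intro a b; rw [Real.sin_add, Real.sin_sub]; ring
    have h := key (ρ*x - ρ*T/2) (ρ*T/2)
    rw [show ρ*T/2 + (ρ*x - ρ*T/2) = ρ*x by ring,
        show ρ*T/2 - (ρ*x - ρ*T/2) = ρ*(T-x) by ring] at h
    linarith
  unfold GreenP
  split_ifs with h
  · have hs0 : s = 0 := le_antisymm h h0
    subst hs0
    rw [show ρ*(0-0) = ρ*0 by ring, show ρ*(T-0+0) = ρ*(T-0) by ring, hnum 0, hden]
    have : sin (ρ*T/2) ≠ 0 := hs
    field_simp
  · rw [show ρ*(s-0) = ρ*s by ring, show ρ*(T-s+0) = ρ*(T-s) by ring, hnum s, hden]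
    field_simp

theorem periodic_gamma_cases_1B_1A (T : ℝ) (hT : 0 < T) (k : ℕ) (hk : 0 < k) (ρ : ℝ) :
    ((4 * k - 1) * π / T < ρ → ρ < 4 * k * π / T →
      (∫ s in (0 : ℝ)..T, GreenPpos T ρ 0 s) / (∫ s in (0 : ℝ)..T, GreenPneg T ρ 0 s) =
        2 * k / (2 * k + sin (ρ * T / 2))) ∧
    (4 * k * π / T < ρ → ρ < (4 * k + 1) * π / T →
      (∫ s in (0 : ℝ)..T, GreenPpos T ρ 0 s) / (∫ s in (0 : ℝ)..T, GreenPneg T ρ 0 s) =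
        (2 * k + sin (ρ * T / 2)) / (2 * k)) := by
  have hpi := pi_pos
  have hk1 : (1:ℝ) ≤ (k:ℝ) := by exact_mod_cast hk
  constructor
  · intro h1 h2
    set θ := ρ*T/2 with hθ
    have hθ1 : 2*k*π - π/2 < θ := by
      have := (div_lt_iff₀ hT).mp h1
      rw [hθ]; nlinarith
    have hθ2 : θ < 2*k*π := by
      have := (lt_div_iff₀ hT).mp h2
      rw [hθ]; nlinarith
    have hθ2' : θ < 2*k*π + π/2 := by linarith
    have hρ : 0 < ρ := by
      have hnum : 0 < (4*k-1)*π := by nlinarith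
      have : 0 < (4*k-1)*π/T := div_pos hnum hT
      linarith
    have hsin : sin θ < 0 := by
      have : sin θ = sin (θ - 2*k*π) := by
        have h := Real.sin_add_nat_mul_two_pi (θ - 2*k*π) k
        rw [show θ - 2*k*π + k*(2*π) = θ by ring] at h
        exact h
      rw [this]
      apply Real.sin_neg_of_neg_of_neg_pi_lt <;> linarith
    have hsne : sin θ ≠ 0 := ne_of_lt hsin
    have hd : 2*ρ*sin θ < 0 := by nlinarith
    -- rewrite integrals
    have hIpos : (∫ s in (0:ℝ)..T, GreenPpos T ρ 0 s)
        = (-(2*ρ*sin θ))⁻¹ * (ρ⁻¹ * (4*k)) := by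
      have hcg : ∀ x ∈ uIcc (0:ℝ) T, GreenPpos T ρ 0 x
          = (-(2*ρ*sin θ))⁻¹ * max (-cos (ρ*x + -θ)) 0 := by
        intro x hx
        rw [uIcc_of_le hT.le] at hx
        unfold GreenPpos
        rw [greenP_eq T ρ (ne_of_gt hρ) hsne x hx.1, ← hθ]
        rw [show cos (ρ*x - θ) / (2*ρ*sin θ) = (-(2*ρ*sin θ))⁻¹ * (-cos (ρ*x + -θ)) by
          field_simp; ring]
        rw [mul_max_of_nonneg _ _ (le_of_lt (inv_pos.mpr (by linarith : (0:ℝ) < -(2*ρ*sin θ)))), mul_zero]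
      rw [intervalIntegral.integral_congr hcg, intervalIntegral.integral_const_mul]
      congr 1
      rw [intervalIntegral.integral_comp_mul_add (fun u => max (-cos u) 0) (ne_of_gt hρ) (-θ)]
      rw [show ρ*0 + -θ = -θ by ring, show ρ*T + -θ = θ by rw [hθ]; ring]
      rw [smul_eq_mul, key_neg k θ hθ1 hθ2']
    have hIneg : (∫ s in (0:ℝ)..T, GreenPneg T ρ 0 s)
        = (-(2*ρ*sin θ))⁻¹ * (ρ⁻¹ * (4*k + 2*sin θ)) := by
      have hcg : ∀ x ∈ uIcc (0:ℝ) T, GreenPneg T ρ 0 x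
          = (-(2*ρ*sin θ))⁻¹ * max (cos (ρ*x + -θ)) 0 := by
        intro x hx
        rw [uIcc_of_le hT.le] at hx
        unfold GreenPneg
        rw [greenP_eq T ρ (ne_of_gt hρ) hsne x hx.1, ← hθ]
        rw [show -(cos (ρ*x - θ) / (2*ρ*sin θ)) = (-(2*ρ*sin θ))⁻¹ * cos (ρ*x + -θ) by
          field_simp; ring]
        rw [mul_max_of_nonneg _ _ (le_of_lt (inv_pos.mpr (by linarith : (0:ℝ) < -(2*ρ*sin θ)))), mul_zero]
      rw [intervalIntegral.integral_congr hcg, intervalIntegral.integral_const_mul]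
      congr 1
      rw [intervalIntegral.integral_comp_mul_add (fun u => max (cos u) 0) (ne_of_gt hρ) (-θ)]
      rw [show ρ*0 + -θ = -θ by ring, show ρ*T + -θ = θ by rw [hθ]; ring]
      rw [smul_eq_mul, key_pos k θ hθ1 hθ2']
    rw [hIpos, hIneg]
    have hb1 : (0:ℝ) < 4*k + 2*sin θ := by
      have := Real.neg_one_le_sin θ
      nlinarith
    have hb2 : (0:ℝ) < 2*k + sin θ := by
      have := Real.neg_one_le_sin θ
      nlinarith
    have hm : (0:ℝ) < (-(2*ρ*sin θ))⁻¹ := inv_pos.mpr (by linarith)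
    rw [mul_div_mul_left _ _ (ne_of_gt hm),
        mul_div_mul_left _ _ (inv_ne_zero (ne_of_gt hρ)),
        div_eq_div_iff (by linarith) (by linarith)]
    ring
  · intro h1 h2
    set θ := ρ*T/2 with hθ
    have hθ1 : 2*k*π < θ := by
      have := (div_lt_iff₀ hT).mp h1
      rw [hθ]; nlinarith
    have hθ1' : 2*k*π - π/2 < θ := by linarith
    have hθ2 : θ < 2*k*π + π/2 := by
      have := (lt_div_iff₀ hT).mp h2
      rw [hθ]; nlinarith
    have hρ : 0 < ρ := by
      have hnum : 0 < 4*(k:ℝ)*π := by nlinarith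
      have : 0 < 4*(k:ℝ)*π/T := div_pos hnum hT
      linarith
    have hsin : 0 < sin θ := by
      have : sin θ = sin (θ - 2*k*π) := by
        have h := Real.sin_add_nat_mul_two_pi (θ - 2*k*π) k
        rw [show θ - 2*k*π + k*(2*π) = θ by ring] at h
        exact h
      rw [this]
      apply Real.sin_pos_of_pos_of_lt_pi <;> linarith
    have hsne : sin θ ≠ 0 := ne_of_gt hsin
    have hd : 0 < 2*ρ*sin θ := by nlinarith
    have hIpos : (∫ s in (0:ℝ)..T, GreenPpos T ρ 0 s)
        = (2*ρ*sin θ)⁻¹ * (ρ⁻¹ * (4*k + 2*sin θ)) := by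
      have hcg : ∀ x ∈ uIcc (0:ℝ) T, GreenPpos T ρ 0 x
          = (2*ρ*sin θ)⁻¹ * max (cos (ρ*x + -θ)) 0 := by
        intro x hx
        rw [uIcc_of_le hT.le] at hx
        unfold GreenPpos
        rw [greenP_eq T ρ (ne_of_gt hρ) hsne x hx.1, ← hθ]
        rw [show cos (ρ*x - θ) / (2*ρ*sin θ) = (2*ρ*sin θ)⁻¹ * cos (ρ*x + -θ) by
          field_simp; ring]
        rw [mul_max_of_nonneg _ _ (le_of_lt (inv_pos.mpr hd)), mul_zero]
      rw [intervalIntegral.integral_congr hcg, intervalIntegral.integral_const_mul]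
      congr 1
      rw [intervalIntegral.integral_comp_mul_add (fun u => max (cos u) 0) (ne_of_gt hρ) (-θ)]
      rw [show ρ*0 + -θ = -θ by ring, show ρ*T + -θ = θ by rw [hθ]; ring]
      rw [smul_eq_mul, key_pos k θ hθ1' hθ2]
    have hIneg : (∫ s in (0:ℝ)..T, GreenPneg T ρ 0 s)
        = (2*ρ*sin θ)⁻¹ * (ρ⁻¹ * (4*k)) := by
      have hcg : ∀ x ∈ uIcc (0:ℝ) T, GreenPneg T ρ 0 x
          = (2*ρ*sin θ)⁻¹ * max (-cos (ρ*x + -θ)) 0 := by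
        intro x hx
        rw [uIcc_of_le hT.le] at hx
        unfold GreenPneg
        rw [greenP_eq T ρ (ne_of_gt hρ) hsne x hx.1, ← hθ]
        rw [show -(cos (ρ*x - θ) / (2*ρ*sin θ)) = (2*ρ*sin θ)⁻¹ * -cos (ρ*x + -θ) by
          field_simp; ring]
        rw [mul_max_of_nonneg _ _ (le_of_lt (inv_pos.mpr hd)), mul_zero]
      rw [intervalIntegral.integral_congr hcg, intervalIntegral.integral_const_mul]
      congr 1
      rw [intervalIntegral.integral_comp_mul_add (fun u => max (-cos u) 0) (ne_of_gt hρ) (-θ)]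
      rw [show ρ*0 + -θ = -θ by ring, show ρ*T + -θ = θ by rw [hθ]; ring]
      rw [smul_eq_mul, key_neg k θ hθ1' hθ2]
    rw [hIpos, hIneg]
    have hm : (0:ℝ) < (2*ρ*sin θ)⁻¹ := inv_pos.mpr hd
    have hk0 : (0:ℝ) < (k:ℝ) := by exact_mod_cast hk
    rw [mul_div_mul_left _ _ (ne_of_gt hm),
        mul_div_mul_left _ _ (inv_ne_zero (ne_of_gt hρ)),
        div_eq_div_iff (by linarith) (by linarith)]
    ring
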